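/- Let q be an odd prime power with q ≡ ±3 (mod 8). Then the product of all a ∈ F_q^× such that 2-a and 2+a are both nonzero squares equals (-1)^{⌊q/8⌋}. -/

import Mathlib

open scoped Classical

open Polynomial in
lemma prod_one_add_pow {K : Type*} [Field K] {r : ℕ} (hr : Odd r) (h2 : (2:K) ≠ 0)
    {ζ : K} (hζ : IsPrimitiveRoot ζ r) :
    ∏ k ∈ Finset.Ico 1 r, (1 + ζ ^ k) = 1 := by
  classical
  have hr0 : 0 < r := hr.pos
  have himg : Finset.image (fun k => ζ ^ k) (Finset.range r) = nthRootsFinset r (1 : K) := by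
    apply Finset.eq_of_subset_of_card_le
    · intro u hu
      obtain ⟨k, -, rfl⟩ := Finset.mem_image.mp hu
      exact (mem_nthRootsFinset hr0 1).mpr (by rw [← pow_mul, mul_comm, pow_mul, hζ.pow_eq_one, one_pow])
    · rw [hζ.card_nthRootsFinset, Finset.card_image_of_injOn, Finset.card_range]
      intro a ha b hb hab
      exact hζ.pow_inj (Finset.mem_range.mp ha) (Finset.mem_range.mp hb) hab
  have key : ∏ u ∈ nthRootsFinset r (1 : K), (-1 - u) = -2 := by
    have := congrArg (Polynomial.eval (-1 : K)) (X_pow_sub_one_eq_prod hr0 hζ)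
    rw [Polynomial.eval_sub, Polynomial.eval_pow, Polynomial.eval_one, Polynomial.eval_X,
      Polynomial.eval_prod] at this
    simp only [Polynomial.eval_sub, Polynomial.eval_X, Polynomial.eval_C] at this
    rw [← this, hr.neg_one_pow]; ring
  rw [← himg, Finset.prod_image (by
    intro a ha b hb hab
    exact hζ.pow_inj (Finset.mem_range.mp ha) (Finset.mem_range.mp hb) hab)] at key
  rw [Finset.range_eq_Ico, Finset.prod_eq_prod_Ico_succ_bot hr0] at key
  have key2 : ∏ k ∈ Finset.Ico 1 r, (-1 - ζ ^ k) = 1 := by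
    have h2' : (-1 - ζ ^ 0 : K) = -2 := by simp; ring
    rw [zero_add, h2'] at key
    have hne : (-2:K) ≠ 0 := by simpa using h2
    field_simp at key
    exact neg_inj.mp key
  calc ∏ k ∈ Finset.Ico 1 r, (1 + ζ ^ k)
      = ∏ k ∈ Finset.Ico 1 r, ((-1) * (-1 - ζ ^ k)) := by
        apply Finset.prod_congr rfl; intro k _; ring
    _ = (-1)^(r-1) * ∏ k ∈ Finset.Ico 1 r, (-1 - ζ ^ k) := by
        rw [Finset.prod_mul_distrib, Finset.prod_const, Nat.card_Ico]
    _ = 1 := by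
        rw [key2, mul_one, Even.neg_one_pow]
        exact Nat.Odd.sub_odd hr odd_one

lemma prod_T22_aux (F : Type*) [Field F] [Fintype F] (q m : ℕ)
    (hq : Fintype.card F = q) (hodd : Odd q) (hm8 : m % 8 = 4)
    (hcase : q = m + 1 ∨ q + 1 = m) :
    (∏ a ∈ Finset.univ.filter (fun a : F =>
        a ≠ 0 ∧ (2 - a ≠ 0 ∧ IsSquare (2 - a)) ∧ (2 + a ≠ 0 ∧ IsSquare (2 + a))), a)
      = (-1 : F) ^ ((m - 4) / 8) := by
  classical
  -- basic numerology
  obtain ⟨r, hr⟩ : ∃ r, m = 4 * r := ⟨m / 4, by omega⟩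
  have hrodd : Odd r := ⟨(r-1)/2, by omega⟩
  obtain ⟨t, ht⟩ := id hrodd
  have hr1 : 1 ≤ r := by omega
  have hq3 : 3 ≤ q := by omega
  have hm0 : 0 < m := by omega
  -- characteristic
  set p := ringChar F with hp
  haveI hcharF : CharP F p := ringChar.charP F
  haveI hpp : Fact p.Prime := ⟨CharP.char_is_prime F p⟩
  obtain ⟨f, hf⟩ := FiniteField.card F p
  have hpodd : p ≠ 2 := by
    intro h
    rw [← hq, hf.2, h] at hodd
    have h1 := Nat.odd_iff.mp hodd
    have h0 := Nat.even_iff.mp (Nat.even_pow.mpr ⟨even_two, f.pos.ne'⟩)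
    omega
  have hpdvd2 : ¬ (p ∣ 2) := by
    intro h
    exact hpodd ((Nat.prime_dvd_prime_iff_eq hf.1 Nat.prime_two).mp h)
  have h2F : (2 : F) ≠ 0 := by
    intro h
    exact hpdvd2 ((CharP.cast_eq_zero_iff F p 2).mp (by exact_mod_cast h))
  -- pass to the algebraic closure
  set K := AlgebraicClosure F with hK
  set ι : F →+* K := algebraMap F K with hιdef
  have hι : Function.Injective ι := ι.injective
  haveI hcharK : CharP K p := charP_of_injective_algebraMap hι p
  have hι2 : ι 2 = 2 := by rw [map_ofNat]
  have h2K : (2 : K) ≠ 0 := by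
    intro h
    exact h2F (hι (by rw [hι2, map_zero, h]))
  have hqpf : q = p ^ (f : ℕ) := by rw [← hq, hf.2]
  have hfrob : ∀ u v : K, (u + v) ^ q = u ^ q + v ^ q := by
    intro u v; rw [hqpf]; exact add_pow_char_pow u v p (f:ℕ)
  have hfrobsub : ∀ u v : K, (u - v) ^ q = u ^ q - v ^ q := by
    intro u v
    rw [sub_eq_add_neg, hfrob, hodd.neg_pow, sub_eq_add_neg]
  have hfrobF : ∀ x : F, x ^ q = x := fun x => by rw [← hq]; exact FiniteField.pow_card x
  have hιfix : ∀ x : F, (ι x) ^ q = ι x := fun x => by rw [← map_pow, hfrobF]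
  have h2q : (2:K) ^ q = 2 := by rw [← hι2, hιfix]
  -- fixed points of Frobenius lie in F
  have hfix : ∀ u : K, u ^ q = u → ∃ a : F, ι a = u := by
    intro u hu
    by_contra hcon
    push_neg at hcon
    have hS : (insert u (Finset.image ι Finset.univ)).card = q + 1 := by
      rw [Finset.card_insert_of_notMem, Finset.card_image_of_injective _ hι,
        Finset.card_univ, hq]
      simp only [Finset.mem_image]
      rintro ⟨a, -, ha⟩; exact hcon a ha
    set P : Polynomial K := Polynomial.X ^ q - Polynomial.X with hP
    have hdeg : P.natDegree = q := by
      rw [hP]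
      rw [Polynomial.natDegree_sub_eq_left_of_natDegree_lt] <;>
        simp [Polynomial.natDegree_X_pow, Polynomial.natDegree_X] <;> omega
    have hPne : P ≠ 0 := by
      intro h
      rw [h, Polynomial.natDegree_zero] at hdeg; omega
    have hroots : insert u (Finset.image ι Finset.univ) ⊆ P.roots.toFinset := by
      intro v hv
      rw [Multiset.mem_toFinset, Polynomial.mem_roots hPne]
      rcases Finset.mem_insert.mp hv with rfl | hv
      · simp [hP, Polynomial.IsRoot.def, hu]
      · obtain ⟨a, -, rfl⟩ := Finset.mem_image.mp hv
        simp [hP, Polynomial.IsRoot.def, hιfix a]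
    have h1 := Finset.card_le_card hroots
    have h2 := Multiset.toFinset_card_le P.roots
    have h3 := P.card_roots'
    omega
  -- a primitive m-th root of unity
  have hmne : (m : K) ≠ 0 := by
    intro h
    have hdvd := (CharP.cast_eq_zero_iff K p m).mp h
    have hpq : p ∣ q := by rw [hqpf]; exact dvd_pow_self p f.pos.ne'
    have hp1 : p ∣ 1 := by
      rcases hcase with h1 | h1
      · have := Nat.dvd_sub hpq hdvd
        rw [h1] at this; simpa using this
      · have := Nat.dvd_sub hdvd hpq
        rw [← h1] at this; simpa using this
    exact hf.1.one_lt.ne' (Nat.dvd_one.mp hp1)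
  haveI : NeZero ((m : ℕ) : K) := ⟨hmne⟩
  obtain ⟨θ, hθ⟩ := HasEnoughRootsOfUnity.exists_primitiveRoot K m
  have hθ0 : θ ≠ 0 := hθ.ne_zero (by omega)
  have hθm : θ ^ m = 1 := hθ.pow_eq_one
  have hpow_ne : ∀ j : ℕ, 0 < j → j < m → θ ^ j ≠ 1 := by
    intro j hj hjm h1
    have hdvd := (hθ.pow_eq_one_iff_dvd j).mp h1
    have := Nat.le_of_dvd hj hdvd; omega
  have hhalf : θ ^ (2 * r) = -1 := by
    rcases mul_self_eq_one_iff.mp (show θ^(2*r) * θ^(2*r) = 1 by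
      rw [← pow_add, show 2*r + 2*r = m by omega, hθm]) with h | h
    · exact absurd h (hpow_ne _ (by omega) (by omega))
    · exact h
  set i : K := θ ^ r with hidef
  have hi2 : i ^ 2 = -1 := by rw [hidef, ← pow_mul, mul_comm r 2, hhalf]
  have hine : i ≠ 0 := pow_ne_zero _ hθ0
  have hiinv : i⁻¹ = -i := (eq_inv_of_mul_eq_one_left (by linear_combination -hi2)).symm
  -- the correlated case data
  have hcomb : (q = m + 1 ∧ θ ^ q = θ) ∨ (q + 1 = m ∧ θ ^ q = θ⁻¹) := by
    rcases hcase with h1 | h1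
    · exact Or.inl ⟨h1, by rw [h1, pow_succ, hθm, one_mul]⟩
    · refine Or.inr ⟨h1, eq_inv_of_mul_eq_one_left (by rw [← pow_succ, h1, hθm])⟩
  set T := Finset.univ.filter (fun a : F =>
        a ≠ 0 ∧ (2 - a ≠ 0 ∧ IsSquare (2 - a)) ∧ (2 + a ≠ 0 ∧ IsSquare (2 + a))) with hT
  set e : ℕ → K := fun k => -(θ^(2*k) + (θ^(2*k))⁻¹) with he
  have hθkne : ∀ k : ℕ, θ ^ k ≠ 0 := fun k => pow_ne_zero _ hθ0
  -- injectivity of e on Ico 1 r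
  have hinj : ∀ j ∈ Finset.Ico 1 r, ∀ k ∈ Finset.Ico 1 r, e j = e k → j = k := by
    intro j hj k hk hjk
    rw [Finset.mem_Ico] at hj hk
    have hA : θ^(2*j) ≠ 0 := hθkne _
    have hB : θ^(2*k) ≠ 0 := hθkne _
    have h0 : θ^(2*j) + (θ^(2*j))⁻¹ = θ^(2*k) + (θ^(2*k))⁻¹ := by
      have := hjk; rw [he] at this; simp only [neg_inj] at this; exact neg_inj.mp this
    have key : (θ^(2*j) - θ^(2*k)) * (θ^(2*j) - (θ^(2*k))⁻¹) = 0 := by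
      have expand : (θ^(2*j) - θ^(2*k)) * (θ^(2*j) - (θ^(2*k))⁻¹)
          = θ^(2*j) * ((θ^(2*j) + (θ^(2*j))⁻¹) - (θ^(2*k) + (θ^(2*k))⁻¹)) := by
        linear_combination mul_inv_cancel₀ hB - mul_inv_cancel₀ hA
      rw [expand, h0, sub_self, mul_zero]
    rcases mul_eq_zero.mp key with h | h
    · have heq := sub_eq_zero.mp h
      have := hθ.pow_inj (show 2*j < m by omega) (show 2*k < m by omega) heq
      omega
    · have heq := sub_eq_zero.mp h
      have hone : θ^(2*j) * θ^(2*k) = 1 := by rw [heq]; exact inv_mul_cancel₀ hB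
      rw [← pow_add] at hone
      have hdvd := (hθ.pow_eq_one_iff_dvd _).mp hone
      have := Nat.le_of_dvd (by omega) hdvd
      omega
  -- image description
  have hη : IsPrimitiveRoot (θ ^ 2) (2*r) := hθ.pow hm0 (by omega)
  haveI : NeZero (2*r) := ⟨by omega⟩
  have himage : Finset.image ι T = Finset.image e (Finset.Ico 1 r) := by
    ext u
    simp only [Finset.mem_image]
    constructor
    · rintro ⟨a, haT, rfl⟩
      rw [hT, Finset.mem_filter] at haT
      obtain ⟨-, ha0, ⟨hma0, x, hx⟩, ⟨hpa0, y, hy⟩⟩ := haT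
      have hxne : x ≠ 0 := by rintro rfl; rw [mul_zero] at hx; exact hma0 hx
      have hyne : y ≠ 0 := by rintro rfl; rw [mul_zero] at hy; exact hpa0 hy
      set X := ι x with hXdef
      set Y := ι y with hYdef
      set z := (X + i * Y) / 2 with hzdef
      set w := (X - i * Y) / 2 with hwdef
      have hX2 : X * X = 2 - ι a := by rw [← map_mul, ← hx, map_sub, hι2]
      have hY2 : Y * Y = 2 + ι a := by rw [← map_mul, ← hy, map_add, hι2]
      have hzw : z * w = 1 := by
        rw [hzdef, hwdef]
        rw [div_mul_div_comm, div_eq_one_iff_eq (mul_ne_zero h2K h2K)]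
        linear_combination hX2 + hY2 - Y * Y * hi2
      have hzne : z ≠ 0 := left_ne_zero_of_mul_eq_one hzw
      have hwz : w = z⁻¹ := eq_inv_of_mul_eq_one_right hzw
      have hzpw : z + w = X := by rw [hzdef, hwdef, ← add_div, show X + i*Y + (X - i*Y) = 2 * X by ring, mul_div_cancel_left₀ _ h2K]
      have hzmw : z - w = i * Y := by rw [hzdef, hwdef, ← sub_div, show X + i*Y - (X - i*Y) = 2 * (i*Y) by ring, mul_div_cancel_left₀ _ h2K]
      have hzq : (q = m + 1 ∧ z ^ q = z) ∨ (q + 1 = m ∧ z ^ q = w) := by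
        have hzq0 : z ^ q = (X ^ q + i ^ q * Y ^ q) / 2 := by
          rw [hzdef, div_pow, hfrob, mul_pow, h2q]
        rcases hcomb with ⟨hc, hfr⟩ | ⟨hc, hfr⟩
        · refine Or.inl ⟨hc, ?_⟩
          rw [hzq0, hXdef, hιfix, hYdef, hιfix, hidef, ← pow_mul, mul_comm r q, pow_mul, hfr]
        · refine Or.inr ⟨hc, ?_⟩
          rw [hzq0, hXdef, hιfix, hYdef, hιfix, hidef, ← pow_mul, mul_comm r q, pow_mul, hfr,
            inv_pow, ← hidef, hiinv, hwdef]
          ring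
      have hzm : z ^ m = 1 := by
        rcases hzq with ⟨hc, h1⟩ | ⟨hc, h1⟩
        · have h2 : z ^ m * z = z := by rw [← pow_succ, ← hc, h1]
          have := mul_right_cancel₀ hzne (h2.trans (one_mul z).symm)
          exact this
        · rw [← hc] at hθm ⊢
          rw [pow_succ, h1, mul_comm, hzw]
      have hwm1 : (z^2) ^ (2*r) = 1 := by
        rw [← pow_mul, show 2*(2*r) = m by omega, hzm]
      obtain ⟨k, hk2r, hkw⟩ := hη.eq_pow_of_pow_eq_one hwm1
      have hz2inv : (z^2)⁻¹ = w^2 := by rw [hwz, inv_pow]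
      have hsum : z^2 + (z^2)⁻¹ = -(ι a) := by
        rw [hz2inv]
        have hexp : z^2 + w^2 = (z + w)^2 - 2 * (z*w) := by ring
        rw [hexp, hzw, hzpw]
        linear_combination hX2
      have hk0 : k ≠ 0 := by
        rintro rfl
        rw [pow_zero] at hkw
        have hz1 : z * z = 1 := by rw [← sq, ← hkw]
        have hzw' : z = w := by rw [hwz]; exact eq_inv_of_mul_eq_one_left hz1
        have h0 : i * Y = 0 := by rw [← hzmw, hzw', sub_self]
        rcases mul_eq_zero.mp h0 with h | h
        · exact hine h
        · exact hyne (hι (by rw [map_zero]; exact h))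
      have hkr : k ≠ r := by
        rintro rfl
        have hz2 : z^2 = -1 := by rw [← hkw, ← pow_mul, hhalf]
        have hwz' : w = -z := by
          rw [hwz]
          exact (eq_inv_of_mul_eq_one_left (show (-z) * z = 1 by linear_combination -hz2)).symm
        have hX0 : X = 0 := by rw [← hzpw, hwz']; ring
        exact hxne (hι (by rw [map_zero]; exact hX0))
      rcases lt_or_gt_of_ne hkr with hlt | hgt
      · refine ⟨k, Finset.mem_Ico.mpr ⟨by omega, hlt⟩, ?_⟩
        rw [he]; simp only
        rw [pow_mul, hkw, hsum, neg_neg]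
      · refine ⟨2*r - k, Finset.mem_Ico.mpr ⟨by omega, by omega⟩, ?_⟩
        have hky : θ^(2*(2*r - k)) = (z^2)⁻¹ := by
          have h1 : θ^(2*(2*r-k)) * θ^(2*k) = 1 := by
            rw [← pow_add, show 2*(2*r-k) + 2*k = m by omega, hθm]
          have h2 : θ^(2*k) = z^2 := by rw [pow_mul, hkw]
          rw [h2] at h1
          exact eq_inv_of_mul_eq_one_left h1
        rw [he]; simp only
        rw [hky, inv_inv, add_comm, hsum, neg_neg]
    · rintro ⟨k, hkmem, rfl⟩
      rw [Finset.mem_Ico] at hkmem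
      obtain ⟨hk1, hkr⟩ := hkmem
      set A := θ ^ k with hAdef
      have hAne : A ≠ 0 := hθkne _
      have hA2 : θ^(2*k) = A * A := by rw [hAdef, ← pow_add]; congr 1; omega
      set X' := A + A⁻¹ with hX'
      set Y' := (A - A⁻¹) * (-i) with hY'
      have hek : e k = 2 - X' * X' := by
        rw [he]; simp only
        rw [hA2, hX']
        rw [mul_inv]
        linear_combination 2 * mul_inv_cancel₀ hAne
      have hek2 : e k + 2 = Y' * Y' := by
        rw [he]; simp only
        rw [hA2, hY']
        have : (A - A⁻¹) * -i * ((A - A⁻¹) * -i) = (A - A⁻¹)^2 * i^2 := by ring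
        rw [this, hi2]
        rw [mul_inv]
        linear_combination -2 * mul_inv_cancel₀ hAne
      have hAq : (A ^ q = A ∧ i ^ q = i) ∨ (A ^ q = A⁻¹ ∧ i ^ q = -i) := by
        rcases hcomb with ⟨-, hfr⟩ | ⟨-, hfr⟩
        · exact Or.inl ⟨by rw [hAdef, ← pow_mul, mul_comm k q, pow_mul, hfr],
            by rw [hidef, ← pow_mul, mul_comm r q, pow_mul, hfr]⟩
        · refine Or.inr ⟨by rw [hAdef, ← pow_mul, mul_comm k q, pow_mul, hfr, inv_pow], ?_⟩
          rw [hidef, ← pow_mul, mul_comm r q, pow_mul, hfr, inv_pow, ← hidef, hiinv]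
      have hX'q : X' ^ q = X' := by
        rw [hX', hfrob, inv_pow]
        rcases hAq with ⟨h1, -⟩ | ⟨h1, -⟩
        · rw [h1]
        · rw [h1, inv_inv, add_comm]
      have hY'q : Y' ^ q = Y' := by
        rw [hY', mul_pow, hfrobsub, inv_pow, hodd.neg_pow]
        rcases hAq with ⟨h1, h2⟩ | ⟨h1, h2⟩
        · rw [h1, h2]
        · rw [h1, h2, inv_inv]; ring
      have huq : (e k) ^ q = e k := by
        rw [hek, hfrobsub, h2q, mul_pow, hX'q]
      obtain ⟨a, ha⟩ := hfix _ huq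
      obtain ⟨x, hxa⟩ := hfix _ hX'q
      obtain ⟨y, hya⟩ := hfix _ hY'q
      have hxx : 2 - a = x * x := by
        apply hι
        rw [map_sub, map_mul, hι2, ha, hxa, hek]; ring
      have hyy : 2 + a = y * y := by
        apply hι
        rw [map_add, map_mul, hι2, ha, hya, ← hek2]; ring
      have hX'ne : X' ≠ 0 := by
        intro h0
        have h1 : θ^(2*k) = -1 := by
          rw [hA2]
          have h4 : A * X' = A * A + 1 := by
            rw [hX', mul_add, mul_inv_cancel₀ hAne]
          rw [h0, mul_zero] at h4
          linear_combination -h4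
        have := hθ.pow_inj (show 2*k < m by omega) (show 2*r < m by omega)
          (h1.trans hhalf.symm)
        omega
      have hY'ne : Y' ≠ 0 := by
        intro h0
        rcases mul_eq_zero.mp h0 with h | h
        · have h1 : θ^(2*k) = 1 := by
            rw [hA2]
            have hAA : A = A⁻¹ := by linear_combination h
            calc A * A = A * A⁻¹ := by rw [← hAA]
              _ = 1 := mul_inv_cancel₀ hAne
          exact hpow_ne (2*k) (by omega) (by omega) h1
        · exact hine (by rw [← neg_neg i, h, neg_zero])
      have hxne : x ≠ 0 := by
        rintro rfl
        exact hX'ne (by rw [← hxa, map_zero])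
      have hyne : y ≠ 0 := by
        rintro rfl
        exact hY'ne (by rw [← hya, map_zero])
      have ha0 : a ≠ 0 := by
        rintro rfl
        rw [map_zero] at ha
        have h0 : θ^(2*k) + (θ^(2*k))⁻¹ = 0 := by
          rw [he] at ha; simp only at ha
          linear_combination ha
        have h1 : θ^(4*k) = -1 := by
          have h2 : θ^(2*k) * θ^(2*k) = -1 := by
            have h3 : θ^(2*k) * (θ^(2*k) + (θ^(2*k))⁻¹) = θ^(2*k) * θ^(2*k) + 1 := by
              rw [mul_add, mul_inv_cancel₀ (hθkne _)]
            rw [h0, mul_zero] at h3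
            linear_combination -h3
          rw [← pow_add] at h2
          rw [show 4*k = 2*k + 2*k by omega]
          exact h2
        have := hθ.pow_inj (show 4*k < m by omega) (show 2*r < m by omega)
          (h1.trans hhalf.symm)
        omega
      refine ⟨a, ?_, ha⟩
      rw [hT, Finset.mem_filter]
      exact ⟨Finset.mem_univ _, ha0,
        ⟨by rw [hxx]; exact mul_ne_zero hxne hxne, ⟨x, hxx⟩⟩,
        ⟨by rw [hyy]; exact mul_ne_zero hyne hyne, ⟨y, hyy⟩⟩⟩
  -- the product identity
  have hprodT : ι (∏ a ∈ T, a) = ∏ k ∈ Finset.Ico 1 r, e k := by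
    rw [map_prod]
    have h1 : ∏ u ∈ Finset.image ι T, (fun u => u) u = ∏ a ∈ T, (fun u => u) (ι a) :=
      Finset.prod_image (fun a _ b _ h => hι h)
    simp only at h1
    rw [← h1, himage, Finset.prod_image hinj]
  -- evaluation of the product
  have hval : ∏ k ∈ Finset.Ico 1 r, e k = (-1) ^ t := by
    have hζ4 : IsPrimitiveRoot (θ^4) r := hθ.pow hm0 (by omega)
    have h1 : ∀ k ∈ Finset.Ico 1 r, e k = ((-1) * (θ^(2*k))⁻¹) * (1 + (θ^4)^k) := by
      intro k hk
      rw [he]; simp only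
      have h2 : (θ^4)^k = θ^(2*k) * θ^(2*k) := by rw [← pow_mul, ← pow_add]; congr 1; omega
      rw [h2]
      linear_combination (θ^(2*k)) * inv_mul_cancel₀ (hθkne (2*k))
    rw [Finset.prod_congr rfl h1, Finset.prod_mul_distrib, Finset.prod_mul_distrib,
      prod_one_add_pow hrodd h2K hζ4, mul_one, Finset.prod_const, Nat.card_Ico]
    have h2 : ∏ k ∈ Finset.Ico 1 r, (θ^(2*k))⁻¹
        = (((θ^2) ^ (∑ k ∈ Finset.Ico 1 r, k))⁻¹) := by
      rw [Finset.prod_inv_distrib]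
      congr 1
      rw [← Finset.prod_pow_eq_pow_sum]
      apply Finset.prod_congr rfl
      intro k _
      rw [pow_mul]
    have hsumIco : ∑ k ∈ Finset.Ico 1 r, k = r * t := by
      have hg : (∑ i ∈ Finset.range r, i) * 2 = r * (r - 1) := Finset.sum_range_id_mul_two r
      have hIR : ∑ k ∈ Finset.Ico 1 r, k = ∑ k ∈ Finset.range r, k := by
        rw [Finset.range_eq_Ico, Finset.sum_eq_sum_Ico_succ_bot (by omega : (0:ℕ) < r)]
        norm_num
      have hr1' : r - 1 = 2 * t := by omega
      rw [hIR]
      have : (∑ i ∈ Finset.range r, i) * 2 = (r * t) * 2 := by rw [hg, hr1']; ring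
      omega
    rw [h2, hsumIco]
    have h3 : ((θ^2):K)^(r*t) = (-1 : K)^t := by
      rw [pow_mul, ← pow_mul θ 2 r, hhalf]
    rw [h3]
    have h4 : ((-1:K)^t)⁻¹ = (-1:K)^t := by
      rw [← inv_pow]; norm_num
    rw [h4, Even.neg_one_pow ⟨t, by omega⟩, one_mul]
  have hfin : ι (∏ a ∈ T, a) = ι ((-1) ^ ((m-4)/8)) := by
    rw [hprodT, hval, map_pow, map_neg, map_one]
    congr 1
    omega
  exact hι hfin

/-- If `q ≡ ±3 (mod 8)`, the product of all `a ∈ F_q^×` with `2-a` and `2+a`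
both nonzero squares equals `(-1)^⌊q/8⌋`. -/
theorem prod_T22_plus (F : Type*) [Field F] [Fintype F] (q : ℕ)
    (hq : Fintype.card F = q) (hodd : Odd q) (h8 : q % 8 = 3 ∨ q % 8 = 5) :
    (∏ a ∈ Finset.univ.filter (fun a : F =>
        a ≠ 0 ∧ (2 - a ≠ 0 ∧ IsSquare (2 - a)) ∧ (2 + a ≠ 0 ∧ IsSquare (2 + a))), a)
      = (-1 : F) ^ (q / 8) := by
  rcases h8 with h | h
  · rw [prod_T22_aux F q (q+1) hq hodd (by omega) (Or.inr rfl)]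
    congr 1
    omega
  · rw [prod_T22_aux F q (q-1) hq hodd (by omega) (Or.inl (by omega))]
    congr 1
    omega
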